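/- Dissipativity identity (classical form of Lemma 2.1): Let V, P be complex-valued C² functions and Φ, Θ complex-valued C¹ functions on [0,L] with V(0) = P(0) = Φ(0) = Θ(0) = 0, and set u = Φ(L), η = Θ(L). Then Re{ ∫₀ᴸ [ (αV″ − γβP″)·conj(Φ) + (βP″ − γβV″)·conj(Θ) + α₁Φ′·conj(V′) + β(γΦ′ − Θ′)·conj(γV′ − P′) ] dx + (−αV′(L) + γβP′(L) − ξ₁u)·conj(u) + (−βP′(L) + γβV′(L) − ξ₂η)·conj(η) } = −ξ₁|u|² − ξ₂|η|². -/

import Mathlib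

open Complex

/-- Dissipativity identity (classical form of Lemma 2.1): the real part of the
weighted inner product `⟨AU, U⟩` equals `−ξ₁|u|² − ξ₂|η|²`. -/
theorem dissipativity_identity
    (ρ μ β m₁ m₂ ξ₁ ξ₂ L γ α₁ α : ℝ)
    (hρ : 0 < ρ) (hμ : 0 < μ) (hβ : 0 < β) (hm₁ : 0 < m₁) (hm₂ : 0 < m₂)
    (hξ₁ : 0 < ξ₁) (hξ₂ : 0 < ξ₂) (hL : 0 < L) (hα₁ : 0 < α₁)
    (hα : α = α₁ + γ ^ 2 * β)
    (V P Φ Θ : ℝ → ℂ)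
    (hV : ContDiff ℝ 2 V) (hP : ContDiff ℝ 2 P)
    (hΦ : ContDiff ℝ 1 Φ) (hΘ : ContDiff ℝ 1 Θ)
    (hV0 : V 0 = 0) (hP0 : P 0 = 0) (hΦ0 : Φ 0 = 0) (hΘ0 : Θ 0 = 0)
    (u η : ℂ) (hu : u = Φ L) (hη : η = Θ L) :
    ((∫ x in (0:ℝ)..L,
        (((α : ℂ) * deriv (deriv V) x - (γ : ℂ) * (β : ℂ) * deriv (deriv P) x)
            * starRingEnd ℂ (Φ x)
          + ((β : ℂ) * deriv (deriv P) x - (γ : ℂ) * (β : ℂ) * deriv (deriv V) x)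
            * starRingEnd ℂ (Θ x)
          + (α₁ : ℂ) * deriv Φ x * starRingEnd ℂ (deriv V x)
          + (β : ℂ) * ((γ : ℂ) * deriv Φ x - deriv Θ x)
            * starRingEnd ℂ ((γ : ℂ) * deriv V x - deriv P x)))
      + (-(α : ℂ) * deriv V L + (γ : ℂ) * (β : ℂ) * deriv P L - (ξ₁ : ℂ) * u)
          * starRingEnd ℂ u
      + (-(β : ℂ) * deriv P L + (γ : ℂ) * (β : ℂ) * deriv V L - (ξ₂ : ℂ) * η)
          * starRingEnd ℂ η).re
    = -(ξ₁ * ‖u‖ ^ 2) - ξ₂ * ‖η‖ ^ 2 := by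
  -- basic differentiability facts
  have hV2 : ContDiff ℝ (1 + 1 : ℕ) V := by exact_mod_cast hV
  have hP2 : ContDiff ℝ (1 + 1 : ℕ) P := by exact_mod_cast hP
  have hVd : Differentiable ℝ V := hV.differentiable (by norm_num)
  have hPd : Differentiable ℝ P := hP.differentiable (by norm_num)
  have hΦd : Differentiable ℝ Φ := hΦ.differentiable (by norm_num)
  have hΘd : Differentiable ℝ Θ := hΘ.differentiable (by norm_num)
  have hV'1 : ContDiff ℝ 1 (deriv V) := (contDiff_succ_iff_deriv.mp (by exact_mod_cast hV2)).2.2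
  have hP'1 : ContDiff ℝ 1 (deriv P) := (contDiff_succ_iff_deriv.mp (by exact_mod_cast hP2)).2.2
  have hV'd : Differentiable ℝ (deriv V) := hV'1.differentiable (by norm_num)
  have hP'd : Differentiable ℝ (deriv P) := hP'1.differentiable (by norm_num)
  have hV''c : Continuous (deriv (deriv V)) := hV'1.continuous_deriv le_rfl
  have hP''c : Continuous (deriv (deriv P)) := hP'1.continuous_deriv le_rfl
  have hΦ'c : Continuous (deriv Φ) := hΦ.continuous_deriv le_rfl
  have hΘ'c : Continuous (deriv Θ) := hΘ.continuous_deriv le_rfl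
  -- the antiderivative and its derivative
  set G : ℝ → ℂ := fun x =>
    ((α : ℂ) * deriv V x - (γ : ℂ) * (β : ℂ) * deriv P x) * starRingEnd ℂ (Φ x)
      + ((β : ℂ) * deriv P x - (γ : ℂ) * (β : ℂ) * deriv V x) * starRingEnd ℂ (Θ x)
    with hGdef
  set G' : ℝ → ℂ := fun x =>
    (((α : ℂ) * deriv (deriv V) x - (γ : ℂ) * (β : ℂ) * deriv (deriv P) x)
        * starRingEnd ℂ (Φ x)
      + ((α : ℂ) * deriv V x - (γ : ℂ) * (β : ℂ) * deriv P x)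
        * starRingEnd ℂ (deriv Φ x))
    + (((β : ℂ) * deriv (deriv P) x - (γ : ℂ) * (β : ℂ) * deriv (deriv V) x)
        * starRingEnd ℂ (Θ x)
      + ((β : ℂ) * deriv P x - (γ : ℂ) * (β : ℂ) * deriv V x)
        * starRingEnd ℂ (deriv Θ x)) with hG'def
  have hGderiv : ∀ x, HasDerivAt G (G' x) x := by
    intro x
    have h1 : HasDerivAt (fun x => (α : ℂ) * deriv V x - (γ : ℂ) * (β : ℂ) * deriv P x)
        ((α : ℂ) * deriv (deriv V) x - (γ : ℂ) * (β : ℂ) * deriv (deriv P) x) x :=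
      (((hV'd x).hasDerivAt).const_mul _).sub (((hP'd x).hasDerivAt).const_mul _)
    have h2 : HasDerivAt (fun x => (β : ℂ) * deriv P x - (γ : ℂ) * (β : ℂ) * deriv V x)
        ((β : ℂ) * deriv (deriv P) x - (γ : ℂ) * (β : ℂ) * deriv (deriv V) x) x :=
      (((hP'd x).hasDerivAt).const_mul _).sub (((hV'd x).hasDerivAt).const_mul _)
    have hΦc : HasDerivAt (fun x => starRingEnd ℂ (Φ x)) (starRingEnd ℂ (deriv Φ x)) x := by
      simpa only [starRingEnd_apply] using ((hΦd x).hasDerivAt).star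
    have hΘc : HasDerivAt (fun x => starRingEnd ℂ (Θ x)) (starRingEnd ℂ (deriv Θ x)) x := by
      simpa only [starRingEnd_apply] using ((hΘd x).hasDerivAt).star
    exact (h1.mul hΦc).add (h2.mul hΘc)
  -- real part of the derivative of G
  have hg : ∀ x, HasDerivAt (fun x => (G x).re) ((G' x).re) x := fun x =>
    (Complex.reCLM.hasFDerivAt.comp_hasDerivAt x (hGderiv x))
  -- the integrand
  set f : ℝ → ℂ := fun x =>
    ((α : ℂ) * deriv (deriv V) x - (γ : ℂ) * (β : ℂ) * deriv (deriv P) x)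
        * starRingEnd ℂ (Φ x)
      + ((β : ℂ) * deriv (deriv P) x - (γ : ℂ) * (β : ℂ) * deriv (deriv V) x)
        * starRingEnd ℂ (Θ x)
      + (α₁ : ℂ) * deriv Φ x * starRingEnd ℂ (deriv V x)
      + (β : ℂ) * ((γ : ℂ) * deriv Φ x - deriv Θ x)
        * starRingEnd ℂ ((γ : ℂ) * deriv V x - deriv P x) with hfdef
  have hfc : Continuous f := by
    apply Continuous.add
    apply Continuous.add
    apply Continuous.add
    · exact ((continuous_const.mul hV''c).sub (continuous_const.mul hP''c)).mul
        (Complex.continuous_conj.comp hΦ.continuous)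
    · exact ((continuous_const.mul hP''c).sub (continuous_const.mul hV''c)).mul
        (Complex.continuous_conj.comp hΘ.continuous)
    · exact (continuous_const.mul hΦ'c).mul
        (Complex.continuous_conj.comp hV'1.continuous)
    · exact (continuous_const.mul ((continuous_const.mul hΦ'c).sub hΘ'c)).mul
        (Complex.continuous_conj.comp
          ((continuous_const.mul hV'1.continuous).sub hP'1.continuous))
  have hfint : IntervalIntegrable f MeasureTheory.volume 0 L := hfc.intervalIntegrable _ _
  -- pointwise: re of integrand = re of G'
  have hre : ∀ x, (f x).re = (G' x).re := by
    intro x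
    simp only [hfdef, hG'def, hα]
    set a := deriv Φ x; set b := deriv Θ x; set v := deriv V x; set p := deriv P x
    set A := deriv (deriv V) x; set B := deriv (deriv P) x
    simp only [Complex.add_re, Complex.mul_re, Complex.sub_re, Complex.sub_im,
      Complex.mul_im, Complex.conj_re, Complex.conj_im, Complex.ofReal_re,
      Complex.ofReal_im, map_sub, map_mul, Complex.ofReal_add, Complex.ofReal_mul,
      Complex.add_im, ← Complex.ofReal_pow]
    ring
  -- compute the real part of the integral
  have hmain : (∫ x in (0:ℝ)..L, f x).re = (G L).re - (G 0).re := by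
    have h1 : (∫ x in (0:ℝ)..L, f x).re = ∫ x in (0:ℝ)..L, (f x).re := by
      have h1' := (ContinuousLinearMap.intervalIntegral_comp_comm Complex.reCLM hfint).symm
      simpa only [Complex.reCLM_apply] using h1'
    rw [h1]
    have h2 : (∫ x in (0:ℝ)..L, (f x).re) = ∫ x in (0:ℝ)..L, (G' x).re := by
      exact intervalIntegral.integral_congr (fun x _ => hre x)
    rw [h2]
    exact intervalIntegral.integral_eq_sub_of_hasDerivAt (fun x _ => hg x)
      ((Complex.continuous_re.comp (by
        apply Continuous.add
        · exact (((continuous_const.mul hV''c).sub (continuous_const.mul hP''c)).mul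
            (Complex.continuous_conj.comp hΦ.continuous)).add
            (((continuous_const.mul hV'1.continuous).sub
              (continuous_const.mul hP'1.continuous)).mul
              (Complex.continuous_conj.comp hΦ'c))
        · exact (((continuous_const.mul hP''c).sub (continuous_const.mul hV''c)).mul
            (Complex.continuous_conj.comp hΘ.continuous)).add
            (((continuous_const.mul hP'1.continuous).sub
              (continuous_const.mul hV'1.continuous)).mul
              (Complex.continuous_conj.comp hΘ'c)))).intervalIntegrable _ _)
  have hG0 : (G 0).re = 0 := by simp [hGdef, hΦ0, hΘ0]
  rw [Complex.add_re, Complex.add_re, hmain, hG0, sub_zero]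
  -- final boundary algebra
  have hbnd : G L
      + (-(α : ℂ) * deriv V L + (γ : ℂ) * (β : ℂ) * deriv P L - (ξ₁ : ℂ) * u)
          * starRingEnd ℂ u
      + (-(β : ℂ) * deriv P L + (γ : ℂ) * (β : ℂ) * deriv V L - (ξ₂ : ℂ) * η)
          * starRingEnd ℂ η
      = -(ξ₁ : ℂ) * (u * starRingEnd ℂ u) - (ξ₂ : ℂ) * (η * starRingEnd ℂ η) := by
    simp only [hGdef, ← hu, ← hη]
    ring
  have := congrArg Complex.re hbnd
  simp only [Complex.add_re] at this
  rw [this]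
  rw [Complex.mul_conj, Complex.mul_conj]
  simp [Complex.normSq_eq_norm_sq, ← Complex.ofReal_pow, ← Complex.ofReal_mul,
    ← Complex.ofReal_neg, ← Complex.ofReal_sub]
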